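/- For jointly distributed discrete random variables with joint density factorizing as p(z,x,t,t',y,y') = p(x) p(z|x) p(t|x) p(t'|x) p(y|z,t) p(y'|z,t'), the log conditional likelihood log p(y'|y,x,t,t') is bounded below by E_{z ~ p(·|y,t,x)}[log p(y|z,t)] - log p(y|x,t) + log p(y'|x,t') - D_KL(p(·|y,t,x) || p(·|y',t',x)), where D_KL is the Kullback-Leibler divergence between the latent posteriors. -/

import Mathlib

open scoped BigOperators

/-- ELBO for the counterfactual conditional likelihood under the twin-network
factorization p(z,x,t,t',y,y') = p(x) p(z|x) p(t|x) p(t'|x) p(y|z,t) p(y'|z,t'). -/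
theorem stmt0 {Z X T Y : Type*} [Fintype Z] [Fintype X] [Fintype T] [Fintype Y]
    (pX : X → ℝ) (pZ : X → Z → ℝ) (pT : X → T → ℝ) (pY : Z → T → Y → ℝ)
    (hX : ∀ x, 0 < pX x) (hZ : ∀ x z, 0 < pZ x z) (hT : ∀ x t, 0 < pT x t)
    (hY : ∀ z t y, 0 < pY z t y)
    (hXsum : ∑ x, pX x = 1) (hZsum : ∀ x, ∑ z, pZ x z = 1)
    (hTsum : ∀ x, ∑ t, pT x t = 1) (hYsum : ∀ z t, ∑ y, pY z t y = 1)
    (x : X) (t t' : T) (y y' : Y) :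
    Real.log ((∑ z, pZ x z * pY z t y * pY z t' y') / (∑ z, pZ x z * pY z t y)) ≥
      (∑ z, (pZ x z * pY z t y / ∑ z', pZ x z' * pY z' t y) * Real.log (pY z t y))
        - Real.log (∑ z, pZ x z * pY z t y)
        + Real.log (∑ z, pZ x z * pY z t' y')
        - ∑ z, (pZ x z * pY z t y / ∑ z', pZ x z' * pY z' t y) *
            Real.log ((pZ x z * pY z t y / ∑ z', pZ x z' * pY z' t y) /
              (pZ x z * pY z t' y' / ∑ z', pZ x z' * pY z' t' y')) := by
  have hZne : Nonempty Z := by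
    by_contra h
    rw [not_nonempty_iff] at h
    have := hZsum x
    simp at this
  -- positivity of the three sums
  have hA : 0 < ∑ z, pZ x z * pY z t y :=
    Finset.sum_pos (fun z _ => mul_pos (hZ x z) (hY z t y)) Finset.univ_nonempty
  have hB : 0 < ∑ z, pZ x z * pY z t' y' :=
    Finset.sum_pos (fun z _ => mul_pos (hZ x z) (hY z t' y')) Finset.univ_nonempty
  set A := ∑ z, pZ x z * pY z t y with hAdef
  set B := ∑ z, pZ x z * pY z t' y' with hBdef
  set q : Z → ℝ := fun z => pZ x z * pY z t y / A with hq
  have hqpos : ∀ z, 0 < q z := fun z => div_pos (mul_pos (hZ x z) (hY z t y)) hA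
  have hqsum : ∑ z, q z = 1 := by
    rw [hq, ← Finset.sum_div]
    exact div_self hA.ne'
  -- RHS simplifies to ∑ q z * log (pY z t' y')
  have hRHS : ((∑ z, q z * Real.log (pY z t y)) - Real.log A + Real.log B
      - ∑ z, q z * Real.log (q z / (pZ x z * pY z t' y' / B)))
      = ∑ z, q z * Real.log (pY z t' y') := by
    have key : ∀ z, q z * Real.log (pY z t y)
        - q z * Real.log (q z / (pZ x z * pY z t' y' / B))
        = q z * Real.log (pY z t' y') + q z * (Real.log A - Real.log B) := by
      intro z
      have h1 : q z / (pZ x z * pY z t' y' / B)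
          = pY z t y / pY z t' y' * (B / A) := by
        rw [hq]
        field_simp [hA.ne', hB.ne', (hZ x z).ne', (hY z t y).ne', (hY z t' y').ne']
      rw [h1, Real.log_mul (div_pos (hY z t y) (hY z t' y')).ne' (div_pos hB hA).ne',
        Real.log_div (hY z t y).ne' (hY z t' y').ne', Real.log_div hB.ne' hA.ne']
      ring
    have : (∑ z, q z * Real.log (pY z t y))
        - (∑ z, q z * Real.log (q z / (pZ x z * pY z t' y' / B)))
        = ∑ z, (q z * Real.log (pY z t' y') + q z * (Real.log A - Real.log B)) := by
      rw [← Finset.sum_sub_distrib]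
      exact Finset.sum_congr rfl fun z _ => key z
    rw [Finset.sum_add_distrib, ← Finset.sum_mul, hqsum, one_mul] at this
    linarith
  -- LHS argument equals ∑ q z * pY z t' y'
  have hLHS : (∑ z, pZ x z * pY z t y * pY z t' y') / A
      = ∑ z, q z * pY z t' y' := by
    rw [Finset.sum_div]
    exact Finset.sum_congr rfl fun z _ => by rw [hq]; field_simp
  -- Jensen's inequality
  have jensen : ∑ z, q z * Real.log (pY z t' y')
      ≤ Real.log (∑ z, q z * pY z t' y') := by
    have := (strictConcaveOn_log_Ioi.concaveOn).le_map_sum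
      (t := Finset.univ) (w := q) (p := fun z => pY z t' y')
      (fun z _ => (hqpos z).le) hqsum (fun z _ => hY z t' y')
    simpa using this
  calc ((∑ z, q z * Real.log (pY z t y)) - Real.log A + Real.log B
      - ∑ z, q z * Real.log (q z / (pZ x z * pY z t' y' / B)))
      = ∑ z, q z * Real.log (pY z t' y') := hRHS
    _ ≤ Real.log (∑ z, q z * pY z t' y') := jensen
    _ = Real.log ((∑ z, pZ x z * pY z t y * pY z t' y') / A) := by rw [hLHS]
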